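/- arXiv:1307.1120 — 4 statements merged into one kernel-verified Lean document; each statement's English description precedes it below -/
import Mathlib

section
/- Given a group G acting on a finite directed graph E (preserving ranges and sources) and a one-cocycle φ : G × E¹ → G satisfying φ(g,e)·v = g·v for all vertices v, there exists a unique extension of the action to the set E* of finite paths together with an extension of φ to G × E* such that: the extended action preserves path length, commutes with range and source, φ(g, v) = g for vertices v, g·(αβ) = (g·α)(φ(g,α)·β) for composable paths α, β, and φ(g, αβ) = φ(φ(g,α), β). -/
noncomputable section

open scoped Classical

/-! ### Corona groups -/

section CoronaSec

variable (G : Type*) [Group G]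

def eventuallyTrivial : Subgroup (ℕ → G) where
  carrier := {f | ∃ N, ∀ n, N ≤ n → f n = 1}
  one_mem' := ⟨0, fun n _ => rfl⟩
  mul_mem' := by
    rintro a b ⟨N, hN⟩ ⟨M, hM⟩
    exact ⟨max N M, fun n hn => by
      simp [Pi.mul_apply, hN n (le_trans (le_max_left _ _) hn),
        hM n (le_trans (le_max_right _ _) hn)]⟩
  inv_mem' := by
    rintro a ⟨N, hN⟩
    exact ⟨N, fun n hn => by simp [Pi.inv_apply, hN n hn]⟩

instance eventuallyTrivial_normal : (eventuallyTrivial G).Normal := by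
  constructor
  rintro a ⟨N, hN⟩ g
  exact ⟨N, fun n hn => by simp [Pi.mul_apply, Pi.inv_apply, hN n hn]⟩

def lshift : (ℕ → G) →* (ℕ → G) where
  toFun f := fun n => f (n + 1)
  map_one' := rfl
  map_mul' a b := rfl

def rshift : (ℕ → G) →* (ℕ → G) where
  toFun f := fun n => if n = 0 then 1 else f (n - 1)
  map_one' := by funext n; by_cases h : n = 0 <;> simp [h]
  map_mul' a b := by funext n; by_cases h : n = 0 <;> simp [h]

lemma lshift_comap : eventuallyTrivial G ≤ (eventuallyTrivial G).comap (lshift G) := by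
  rintro f ⟨N, hN⟩
  exact ⟨N, fun n hn => hN (n + 1) (by omega)⟩

lemma rshift_comap : eventuallyTrivial G ≤ (eventuallyTrivial G).comap (rshift G) := by
  rintro f ⟨N, hN⟩
  refine ⟨N + 1, fun n hn => ?_⟩
  show (if n = 0 then 1 else f (n - 1)) = 1
  rw [if_neg (by omega)]
  exact hN (n - 1) (by omega)

abbrev Corona : Type _ := (ℕ → G) ⧸ eventuallyTrivial G

def coronaRho : Corona G →* Corona G :=
  QuotientGroup.map _ _ (rshift G) (rshift_comap G)

def coronaLam : Corona G →* Corona G :=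
  QuotientGroup.map _ _ (lshift G) (lshift_comap G)

def coronaRhoZ : ℤ → Corona G → Corona G
  | Int.ofNat n => (⇑(coronaRho G))^[n]
  | Int.negSucc n => (⇑(coronaLam G))^[n + 1]

end CoronaSec

/-! ### Graphs, paths and self-similar actions -/

structure SSGraph (V : Type*) (E : Type*) where
  r : E → V
  d : E → V

namespace SSGraph

variable {V E : Type*}

abbrev Pth (V E : Type*) := V × List E

def IsPath (Γ : SSGraph V E) (p : Pth V E) : Prop :=
  (∀ e ∈ p.2.head?, Γ.r e = p.1) ∧ p.2.Chain' fun a b => Γ.d a = Γ.r b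

def src (Γ : SSGraph V E) (p : Pth V E) : V :=
  match p.2.getLast? with
  | none => p.1
  | some e => Γ.d e

def comp (p q : Pth V E) : Pth V E := (p.1, p.2 ++ q.2)

def ofVertex (v : V) : Pth V E := (v, [])

def ofEdge (Γ : SSGraph V E) (e : E) : Pth V E := (Γ.r e, [e])

structure GraphAction (G : Type*) [Group G] (Γ : SSGraph V E) where
  actV : G → V → V
  actE : G → E → E
  actV_one : ∀ v, actV 1 v = v
  actV_mul : ∀ g h v, actV (g * h) v = actV g (actV h v)
  actE_one : ∀ e, actE 1 e = e
  actE_mul : ∀ g h e, actE (g * h) e = actE g (actE h e)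
  r_act : ∀ g e, Γ.r (actE g e) = actV g (Γ.r e)
  d_act : ∀ g e, Γ.d (actE g e) = actV g (Γ.d e)

structure EdgeCocycle {G : Type*} [Group G] {Γ : SSGraph V E} (GA : GraphAction G Γ) where
  φ : G → E → G
  cocycle : ∀ g h e, φ (g * h) e = φ g (GA.actE h e) * φ h e
  vertex_compat : ∀ g e v, GA.actV (φ g e) v = GA.actV g v

/-- The extension of a self-similar `(G,E,φ)`-datum to the set of all finite paths,
with all the properties listed in the extension proposition. -/
structure PathSystem {G : Type*} [Group G] {Γ : SSGraph V E} {GA : GraphAction G Γ}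
    (c : EdgeCocycle GA) where
  act : G → Pth V E → Pth V E
  coc : G → Pth V E → G
  act_vertex : ∀ g v, act g (ofVertex v) = ofVertex (GA.actV g v)
  act_edge : ∀ g e, act g (Γ.ofEdge e) = Γ.ofEdge (GA.actE g e)
  coc_vertex : ∀ g v, coc g (ofVertex v) = g
  coc_edge : ∀ g e, coc g (Γ.ofEdge e) = c.φ g e
  isPath_act : ∀ g p, Γ.IsPath p → Γ.IsPath (act g p)
  length_act : ∀ g p, Γ.IsPath p → (act g p).2.length = p.2.length
  ran_act : ∀ g p, Γ.IsPath p → (act g p).1 = GA.actV g p.1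
  src_act : ∀ g p, Γ.IsPath p → Γ.src (act g p) = GA.actV g (Γ.src p)
  coc_vertex_act : ∀ g p v, Γ.IsPath p → GA.actV (coc g p) v = GA.actV g v
  act_one : ∀ p, Γ.IsPath p → act 1 p = p
  act_mul : ∀ g h p, Γ.IsPath p → act (g * h) p = act g (act h p)
  coc_mul : ∀ g h p, Γ.IsPath p → coc (g * h) p = coc g (act h p) * coc h p
  act_comp : ∀ g p q, Γ.IsPath p → Γ.IsPath q → Γ.src p = q.1 →
    act g (comp p q) = comp (act g p) (act (coc g p) q)
  coc_comp : ∀ g p q, Γ.IsPath p → Γ.IsPath q → Γ.src p = q.1 →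
    coc g (comp p q) = coc (coc g p) q

def PseudoFree {G : Type*} [Group G] {Γ : SSGraph V E} (GA : GraphAction G Γ)
    (c : EdgeCocycle GA) : Prop :=
  ∀ g e, GA.actE g e = e → c.φ g e = 1 → g = 1

/-! ### The inverse semigroup `S_{G,E}` -/

def SgeCond {G : Type*} [Group G] (Γ : SSGraph V E) (GA : GraphAction G Γ)
    (t : Pth V E × G × Pth V E) : Prop :=
  Γ.IsPath t.1 ∧ Γ.IsPath t.2.2 ∧ Γ.src t.1 = GA.actV t.2.1 (Γ.src t.2.2)

def sgeSet {G : Type*} [Group G] (Γ : SSGraph V E) (GA : GraphAction G Γ) :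
    Set (Option (Pth V E × G × Pth V E)) :=
  {x | x = none ∨ ∃ t, x = some t ∧ SgeCond Γ GA t}

def sgeMulAux {G : Type*} [Group G] {Γ : SSGraph V E} {GA : GraphAction G Γ}
    {c : EdgeCocycle GA} (S : PathSystem c) :
    Pth V E × G × Pth V E → Pth V E × G × Pth V E → Option (Pth V E × G × Pth V E) :=
  fun x y =>
    if x.2.2.1 = y.1.1 ∧ x.2.2.2 <+: y.1.2 then
      let ε : Pth V E := (Γ.src x.2.2, y.1.2.drop x.2.2.2.length)
      some (comp x.1 (S.act x.2.1 ε), S.coc x.2.1 ε * y.2.1, y.2.2)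
    else if y.1.1 = x.2.2.1 ∧ y.1.2 <+: x.2.2.2 then
      let ε : Pth V E := (Γ.src y.1, x.2.2.2.drop y.1.2.length)
      some (x.1, x.2.1 * (S.coc y.2.1⁻¹ ε)⁻¹, comp y.2.2 (S.act y.2.1⁻¹ ε))
    else none

def sgeMul {G : Type*} [Group G] {Γ : SSGraph V E} {GA : GraphAction G Γ}
    {c : EdgeCocycle GA} (S : PathSystem c) :
    Option (Pth V E × G × Pth V E) → Option (Pth V E × G × Pth V E) →
      Option (Pth V E × G × Pth V E)
  | some x, some y => sgeMulAux S x y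
  | _, _ => none

def sgeStar {G : Type*} [Group G] :
    Option (Pth V E × G × Pth V E) → Option (Pth V E × G × Pth V E)
  | none => none
  | some t => some (t.2.2, t.2.1⁻¹, t.1)

/-! ### Infinite paths -/

def InfPath (Γ : SSGraph V E) (ξ : ℕ → E) : Prop :=
  ∀ n, Γ.d (ξ n) = Γ.r (ξ (n + 1))

/-- Truncation of an infinite path: the finite path formed by its first `n` edges.
(Index `n` of the sequence is the `(n+1)`-st edge of the path.) -/
def trunc (Γ : SSGraph V E) (ξ : ℕ → E) (n : ℕ) : Pth V E :=
  (Γ.r (ξ 0), (List.range n).map ξ)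

/-- Concatenation `αξ` of a finite path with an infinite path. -/
def compInf (α : Pth V E) (ξ : ℕ → E) : ℕ → E :=
  fun n => α.2.getD n (ξ (n - α.2.length))

/-- `Phi S g ξ n = φ(g, ξ|_n)`, i.e. the entry of the sequence `Φ(g,ξ) ∈ G^∞` at the
`(n+1)`-st position in the 1-based indexing of the paper. -/
def Phi {G : Type*} [Group G] {Γ : SSGraph V E} {GA : GraphAction G Γ}
    {c : EdgeCocycle GA} (S : PathSystem c) (g : G) (ξ : ℕ → E) : ℕ → G :=
  fun n => S.coc g (Γ.trunc ξ n)

/-- The extension of the self-similar action to infinite paths. -/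
structure InfAction {G : Type*} [Group G] {Γ : SSGraph V E} {GA : GraphAction G Γ}
    {c : EdgeCocycle GA} (S : PathSystem c) where
  a : G → (ℕ → E) → (ℕ → E)
  isInf : ∀ g ξ, Γ.InfPath ξ → Γ.InfPath (a g ξ)
  a_one : ∀ ξ, Γ.InfPath ξ → a 1 ξ = ξ
  a_mul : ∀ g h ξ, Γ.InfPath ξ → a (g * h) ξ = a g (a h ξ)
  trunc_a : ∀ g ξ n, Γ.InfPath ξ → Γ.trunc (a g ξ) n = S.act g (Γ.trunc ξ n)

/-- `η` belongs to the cylinder `Z(β)`. -/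
def InCyl (Γ : SSGraph V E) (β : Pth V E) (η : ℕ → E) : Prop :=
  Γ.r (η 0) = β.1 ∧ ∀ n (hn : n < β.2.length), η n = β.2[n]'hn

/-- Equality of germs `[α₁,g₁,β₁; η₁] = [α₂,g₂,β₂; η₂]` for the action of `S_{G,E}`
on the infinite path space. -/
def germEqv {G : Type*} [Group G] {Γ : SSGraph V E} {GA : GraphAction G Γ}
    {c : EdgeCocycle GA} (S : PathSystem c)
    (α₁ : Pth V E) (g₁ : G) (β₁ : Pth V E) (η₁ : ℕ → E)
    (α₂ : Pth V E) (g₂ : G) (β₂ : Pth V E) (η₂ : ℕ → E) : Prop :=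
  η₁ = η₂ ∧ ∃ δ : Pth V E, Γ.IsPath δ ∧ Γ.InCyl δ η₁ ∧
    sgeMul S (some (α₁, g₁, β₁)) (some (δ, 1, δ)) =
      sgeMul S (some (α₂, g₂, β₂)) (some (δ, 1, δ))

/-- The partial isometry `s_α` associated to a finite path. -/
def sPath {A : Type*} [Monoid A] (pv : V → A) (se : E → A) : Pth V E → A :=
  fun x =>
    match x with
    | (v, []) => pv v
    | (_, es) => (es.map se).prod

end SSGraph

end

section PathSystemConstruction

namespace SSGraph

variable {V E G : Type*} [Group G] {Γ : SSGraph V E} {GA : GraphAction G Γ}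

variable (c : EdgeCocycle GA)

def actL : G → List E → List E
  | _, [] => []
  | g, e :: es => GA.actE g e :: actL (c.φ g e) es

def cocL : G → List E → G
  | g, [] => g
  | g, e :: es => cocL (c.φ g e) es

variable {c}

lemma phi_one (e : E) : c.φ 1 e = 1 := by
  have h := c.cocycle 1 1 e
  rw [one_mul, GA.actE_one] at h
  have h2 : c.φ 1 e * 1 = c.φ 1 e * c.φ 1 e := by rw [mul_one]; exact h
  exact (mul_left_cancel h2).symm

lemma actL_length (g : G) (es : List E) : (actL c g es).length = es.length := by
  induction es generalizing g with
  | nil => rfl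
  | cons e es ih => simp [actL, ih]

lemma head?_actL (g : G) (es : List E) :
    (actL c g es).head? = es.head?.map (GA.actE g) := by
  cases es <;> rfl

lemma chain'_actL (g : G) (es : List E)
    (h : es.Chain' fun a b => Γ.d a = Γ.r b) :
    (actL c g es).Chain' fun a b => Γ.d a = Γ.r b := by
  induction es generalizing g with
  | nil => simp [actL]; exact List.isChain_nil
  | cons e es ih =>
    rw [List.Chain', List.isChain_cons] at h
    rw [actL, List.Chain', List.isChain_cons]
    refine ⟨?_, ih _ h.2⟩
    intro b hb
    rw [head?_actL] at hb
    rcases Option.map_eq_some_iff.mp hb with ⟨e', he', rfl⟩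
    rw [GA.d_act, GA.r_act, c.vertex_compat]
    exact congrArg _ (h.1 e' he')

lemma isPath_actL (g : G) (v : V) (es : List E) (h : Γ.IsPath (v, es)) :
    Γ.IsPath (GA.actV g v, actL c g es) := by
  constructor
  · intro b hb
    rw [show ((GA.actV g v, actL c g es) : Pth V E).2 = actL c g es from rfl,
      head?_actL] at hb
    rcases Option.map_eq_some_iff.mp hb with ⟨e', he', rfl⟩
    rw [GA.r_act, h.1 e' he']
  · exact chain'_actL g es h.2

lemma src_cons_cons (v w : V) (e e' : E) (es : List E) :
    Γ.src (v, e :: e' :: es) = Γ.src (w, e' :: es) := by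
  simp only [SSGraph.src, List.getLast?_cons_cons]
  cases h2 : (e' :: es).getLast? with
  | none => simp at h2
  | some x => rfl

lemma src_actL (g : G) (v : V) (es : List E) :
    Γ.src (GA.actV g v, actL c g es) = GA.actV g (Γ.src (v, es)) := by
  induction es generalizing g v with
  | nil => rfl
  | cons e es ih =>
    cases es with
    | nil => simp [actL, SSGraph.src, GA.d_act]
    | cons e' es' =>
      have h1 : Γ.src (GA.actV g v, actL c g (e :: e' :: es')) =
          Γ.src (GA.actV (c.φ g e) (Γ.r e'), actL c (c.φ g e) (e' :: es')) := by
        rw [show actL c g (e :: e' :: es') =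
          GA.actE g e :: actL c (c.φ g e) (e' :: es') from rfl]
        exact src_cons_cons _ _ _ _ _
      rw [h1, ih, src_cons_cons v (Γ.r e') e e' es', c.vertex_compat]

lemma actV_cocL (g : G) (v : V) (es : List E) :
    GA.actV (cocL c g es) v = GA.actV g v := by
  induction es generalizing g with
  | nil => rfl
  | cons e es ih => rw [cocL, ih, c.vertex_compat]

lemma actL_one (es : List E) : actL c 1 es = es := by
  induction es with
  | nil => rfl
  | cons e es ih => rw [actL, GA.actE_one, phi_one, ih]

lemma actL_mul (g h : G) (es : List E) :
    actL c (g * h) es = actL c g (actL c h es) := by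
  induction es generalizing g h with
  | nil => rfl
  | cons e es ih => simp [actL, GA.actE_mul, c.cocycle, ih]

lemma cocL_mul (g h : G) (es : List E) :
    cocL c (g * h) es = cocL c g (actL c h es) * cocL c h es := by
  induction es generalizing g h with
  | nil => rfl
  | cons e es ih => simp [actL, cocL, c.cocycle, ih]

lemma actL_append (g : G) (es fs : List E) :
    actL c g (es ++ fs) = actL c g es ++ actL c (cocL c g es) fs := by
  induction es generalizing g with
  | nil => rfl
  | cons e es ih => simp [actL, cocL, ih]

lemma cocL_append (g : G) (es fs : List E) :
    cocL c g (es ++ fs) = cocL c (cocL c g es) fs := by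
  induction es generalizing g with
  | nil => rfl
  | cons e es ih => simp [cocL, ih]

variable (c)

def mkPathSystem : PathSystem c where
  act g p := (GA.actV g p.1, actL c g p.2)
  coc g p := cocL c g p.2
  act_vertex g v := rfl
  act_edge g e := by simp [ofEdge, actL, GA.r_act]
  coc_vertex g v := rfl
  coc_edge g e := rfl
  isPath_act g p h := isPath_actL g p.1 p.2 h
  length_act g p _ := actL_length g p.2
  ran_act g p _ := rfl
  src_act g p _ := src_actL g p.1 p.2
  coc_vertex_act g p v _ := actV_cocL g v p.2
  act_one p _ := by cases p with | mk v es => simp [actL_one, GA.actV_one]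
  act_mul g h p _ := by cases p with | mk v es => simp [actL_mul, GA.actV_mul]
  coc_mul g h p _ := cocL_mul g h p.2
  act_comp g p q _ _ _ := by simp [comp, actL_append]
  coc_comp g p q _ _ _ := cocL_append g p.2 q.2

variable {c}

lemma pathSystem_unique_aux (S S' : PathSystem c) :
    ∀ (es : List E) (g : G) (v : V), Γ.IsPath (v, es) →
      S'.act g (v, es) = S.act g (v, es) ∧ S'.coc g (v, es) = S.coc g (v, es) := by
  intro es
  induction es with
  | nil =>
    intro g v _
    constructor
    · rw [show ((v, []) : Pth V E) = ofVertex v from rfl, S'.act_vertex, S.act_vertex]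
    · rw [show ((v, []) : Pth V E) = ofVertex v from rfl, S'.coc_vertex, S.coc_vertex]
  | cons e es ih =>
    intro g v h
    have hv : Γ.r e = v := h.1 e rfl
    have hpe : Γ.IsPath (Γ.ofEdge e) := by
      refine ⟨?_, List.isChain_singleton e⟩
      rintro e' he'
      simp only [SSGraph.ofEdge, List.head?_cons, Option.mem_some_iff] at he'
      rw [← he']
      rfl
    have hch := List.isChain_cons.mp h.2
    have htail : Γ.IsPath (Γ.d e, es) :=
      ⟨fun e' he' => (hch.1 e' he').symm, hch.2⟩
    have hsrc : Γ.src (Γ.ofEdge e) = Γ.d e := rfl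
    have hcomp : SSGraph.comp (Γ.ofEdge e) ((Γ.d e, es) : Pth V E) =
        ((v, e :: es) : Pth V E) := by
      simp [SSGraph.comp, SSGraph.ofEdge, hv]
    constructor
    · rw [← hcomp, S'.act_comp _ _ _ hpe htail hsrc, S.act_comp _ _ _ hpe htail hsrc,
        S'.act_edge, S.act_edge, S'.coc_edge, S.coc_edge, (ih (c.φ g e) _ htail).1]
    · rw [← hcomp, S'.coc_comp _ _ _ hpe htail hsrc, S.coc_comp _ _ _ hpe htail hsrc,
        S'.coc_edge, S.coc_edge, (ih (c.φ g e) _ htail).2]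

end SSGraph

end PathSystemConstruction

open SSGraph in
theorem pathSystem_exists_unique {V E G : Type*} [Group G] [Countable G] [Fintype V] [Fintype E]
    (Γ : SSGraph V E) (hns : ∀ v : V, ∃ e, Γ.r e = v)
    (GA : SSGraph.GraphAction G Γ) (c : SSGraph.EdgeCocycle GA) :
    ∃ S : PathSystem c, ∀ S' : PathSystem c,
      ∀ (g : G) (p : Pth V E), Γ.IsPath p →
        S'.act g p = S.act g p ∧ S'.coc g p = S.coc g p := by
  refine ⟨SSGraph.mkPathSystem c, fun S' g p hp => ?_⟩
  obtain ⟨v, es⟩ := p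
  exact SSGraph.pathSystem_unique_aux (SSGraph.mkPathSystem c) S' es g v hp
end

section
/- The set S_{G,E} = {(α,g,β) ∈ E* × G × E* : d(α) = g·d(β)} ∪ {0}, with multiplication (α,g,β)(γ,h,δ) = (α(g·ε), φ(g,ε)h, δ) if γ = βε, = (α, gφ(h⁻¹,ε)⁻¹, δ(h⁻¹·ε)) if β = γε, and 0 otherwise, and involution (α,g,β)* = (β,g⁻¹,α), is an inverse semigroup with zero. -/
section SgeAux

open SSGraph

variable {V E G : Type*} [Group G] {Γ : SSGraph V E} {GA : SSGraph.GraphAction G Γ}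
  {c : SSGraph.EdgeCocycle GA} (S : SSGraph.PathSystem c)

private lemma actV_inv' (g : G) (v : V) : GA.actV g⁻¹ (GA.actV g v) = v := by
  rw [← GA.actV_mul, inv_mul_cancel, GA.actV_one]

private lemma actV_inv'' (g : G) (v : V) : GA.actV g (GA.actV g⁻¹ v) = v := by
  rw [← GA.actV_mul, mul_inv_cancel, GA.actV_one]

private lemma comp_assoc₀ (p q r : Pth V E) :
    SSGraph.comp (SSGraph.comp p q) r = SSGraph.comp p (SSGraph.comp q r) := by
  simp [SSGraph.comp]

private lemma src_mk (v : V) (l : List E) (hl : l ≠ []) :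
    Γ.src (v, l) = Γ.d (l.getLast hl) := by
  simp [SSGraph.src, List.getLast?_eq_getLast hl]

private lemma src_comp' (p q : Pth V E) (h : Γ.src p = q.1) :
    Γ.src (SSGraph.comp p q) = Γ.src q := by
  obtain ⟨v, l⟩ := q
  rcases eq_or_ne l [] with rfl | hl
  · show Γ.src (p.1, p.2 ++ []) = _
    rw [List.append_nil]
    exact h
  · show Γ.src (p.1, p.2 ++ l) = _
    have he : l.getLast? = some (l.getLast hl) := List.getLast?_eq_getLast hl
    simp [SSGraph.src, List.getLast?_append_of_ne_nil _ hl, he]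

private lemma isPath_mk_nil (v : V) : Γ.IsPath (v, ([] : List E)) := by
  exact ⟨by simp, List.isChain_nil⟩

private lemma isPath_comp' {p q : Pth V E} (hp : Γ.IsPath p) (hq : Γ.IsPath q)
    (h : Γ.src p = q.1) : Γ.IsPath (SSGraph.comp p q) := by
  obtain ⟨v, l⟩ := p
  obtain ⟨w, m⟩ := q
  refine ⟨?_, ?_⟩
  · intro e he
    rcases eq_or_ne l [] with rfl | hl
    · rw [show ((SSGraph.comp (v, ([] : List E)) (w, m)).2) = m from by simp [SSGraph.comp]] at he
      rw [hq.1 e he, ← h]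
      rfl
    · obtain ⟨a, l', rfl⟩ := List.exists_cons_of_ne_nil hl
      have he' : e = a := by
        have := he
        simp [SSGraph.comp] at this
        exact this.symm
      subst he'
      exact hp.1 e rfl
  · refine List.isChain_append.2 ⟨hp.2, hq.2, ?_⟩
    intro x hx y hy
    have hl : l ≠ [] := by rintro rfl; simp at hx
    have hx' : x = l.getLast hl := by
      rw [List.getLast?_eq_getLast hl] at hx
      exact (by simpa using hx : _ = x).symm
    subst hx'
    rw [← src_mk v l hl, h]
    exact (hq.1 y hy).symm

private lemma split_path {p q : Pth V E} (hp : Γ.IsPath p) (hq : Γ.IsPath q)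
    (h1 : p.1 = q.1) (h2 : p.2 <+: q.2) :
    ∃ ε : Pth V E, ε.1 = Γ.src p ∧ Γ.IsPath ε ∧ q = SSGraph.comp p ε := by
  obtain ⟨v, l⟩ := p
  obtain ⟨u, s⟩ := q
  obtain ⟨w, hw⟩ := h2
  simp only at h1
  subst h1
  subst hw
  refine ⟨(Γ.src (v, l), w), rfl, ⟨?_, ?_⟩, rfl⟩
  · intro e he
    rcases eq_or_ne l [] with rfl | hl
    · rw [hq.1 e (by simpa using he)]
      rfl
    · have hb := (List.isChain_append.1 hq.2).2.2
      rw [src_mk v l hl]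
      exact (hb _ (by rw [List.getLast?_eq_getLast hl]; rfl) e he).symm
  · exact (List.isChain_append.1 hq.2).2.1

private lemma pathTri {β γ : Pth V E} (hβ : Γ.IsPath β) (hγ : Γ.IsPath γ) :
    (∃ ε : Pth V E, ε.1 = Γ.src β ∧ Γ.IsPath ε ∧ γ = SSGraph.comp β ε) ∨
    ((∃ ε : Pth V E, ε.1 = Γ.src γ ∧ Γ.IsPath ε ∧ ε.2 ≠ [] ∧ β = SSGraph.comp γ ε)) ∨
    (¬(β.1 = γ.1 ∧ β.2 <+: γ.2) ∧ ¬(γ.1 = β.1 ∧ γ.2 <+: β.2)) := by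
  by_cases c1 : β.1 = γ.1 ∧ β.2 <+: γ.2
  · exact Or.inl (split_path hβ hγ c1.1 c1.2)
  · by_cases c2 : γ.1 = β.1 ∧ γ.2 <+: β.2
    · obtain ⟨ε, hε1, hεp, hc⟩ := split_path hγ hβ c2.1 c2.2
      refine Or.inr (Or.inl ⟨ε, hε1, hεp, ?_, hc⟩)
      rintro hnil
      refine c1 ⟨c2.1.symm, ?_⟩
      rw [hc, show (SSGraph.comp γ ε).2 = γ.2 ++ ε.2 from rfl, hnil, List.append_nil]
    · exact Or.inr (Or.inr ⟨c1, c2⟩)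

private lemma coc_one' {p : Pth V E} (hp : Γ.IsPath p) : S.coc 1 p = 1 := by
  have h := S.coc_mul 1 1 p hp
  rw [one_mul, S.act_one p hp] at h
  exact (mul_eq_left.mp h.symm)

private lemma act_inv_act {p : Pth V E} (g : G) (hp : Γ.IsPath p) :
    S.act g⁻¹ (S.act g p) = p := by
  rw [← S.act_mul g⁻¹ g p hp, inv_mul_cancel, S.act_one p hp]

private lemma act_act_inv {p : Pth V E} (g : G) (hp : Γ.IsPath p) :
    S.act g (S.act g⁻¹ p) = p := by
  nth_rewrite 1 [← inv_inv g]
  exact act_inv_act S g⁻¹ hp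

private lemma coc_inv_act {p : Pth V E} (g : G) (hp : Γ.IsPath p) :
    S.coc g⁻¹ (S.act g p) = (S.coc g p)⁻¹ := by
  have h := S.coc_mul g⁻¹ g p hp
  rw [inv_mul_cancel, coc_one' S hp] at h
  exact eq_inv_of_mul_eq_one_left h.symm

private lemma coc_act_inv {p : Pth V E} (g : G) (hp : Γ.IsPath p) :
    S.coc g (S.act g⁻¹ p) = (S.coc g⁻¹ p)⁻¹ := by
  nth_rewrite 1 [← inv_inv g]
  exact coc_inv_act S g⁻¹ hp

private lemma actV_coc_inv {p : Pth V E} (hp : Γ.IsPath p) (g : G) (w : V) :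
    GA.actV (S.coc g p)⁻¹ w = GA.actV g⁻¹ w := by
  have h1 : GA.actV (S.coc g p) (GA.actV g⁻¹ w) = w := by
    rw [S.coc_vertex_act g p _ hp, actV_inv'']
  conv_lhs => rw [← h1]
  rw [← GA.actV_mul, inv_mul_cancel, GA.actV_one]

private lemma sgeMul_some_some (a b : Pth V E × G × Pth V E) :
    sgeMul S (some a) (some b) = sgeMulAux S a b := rfl

private lemma sgeMul_none_left (a : Option (Pth V E × G × Pth V E)) :
    sgeMul S none a = none := by cases a <;> rfl

private lemma sgeMul_none_right (a : Option (Pth V E × G × Pth V E)) :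
    sgeMul S a none = none := by cases a <;> rfl

private lemma mulAux_left (α : Pth V E) (g : G) (β : Pth V E) (h : G) (δ ε : Pth V E)
    (hε : ε.1 = Γ.src β) :
    sgeMulAux S (α, g, β) (SSGraph.comp β ε, h, δ) =
      some (SSGraph.comp α (S.act g ε), S.coc g ε * h, δ) := by
  have hd : ((Γ.src β, (SSGraph.comp β ε).2.drop β.2.length) : Pth V E) = ε := by
    show ((Γ.src β, (β.2 ++ ε.2).drop β.2.length) : Pth V E) = ε
    rw [List.drop_left, ← hε]
  simp only [sgeMulAux]
  rw [if_pos ⟨rfl, ⟨ε.2, rfl⟩⟩, hd]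

private lemma mulAux_right (α : Pth V E) (g : G) (γ : Pth V E) (h : G) (δ ε : Pth V E)
    (hε : ε.1 = Γ.src γ) (hne : ε.2 ≠ []) :
    sgeMulAux S (α, g, SSGraph.comp γ ε) (γ, h, δ) =
      some (α, g * (S.coc h⁻¹ ε)⁻¹, SSGraph.comp δ (S.act h⁻¹ ε)) := by
  have hd : ((Γ.src γ, (SSGraph.comp γ ε).2.drop γ.2.length) : Pth V E) = ε := by
    show ((Γ.src γ, (γ.2 ++ ε.2).drop γ.2.length) : Pth V E) = ε
    rw [List.drop_left, ← hε]
  simp only [sgeMulAux]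
  rw [if_neg, if_pos ⟨rfl, ⟨ε.2, rfl⟩⟩, hd]
  rintro ⟨-, hpre⟩
  have hle := hpre.length_le
  rw [show (SSGraph.comp γ ε).2 = γ.2 ++ ε.2 from rfl] at hle
  simp only [List.length_append] at hle
  exact hne (List.length_eq_zero_iff.mp (by omega))

private lemma mulAux_none (α : Pth V E) (g : G) (β γ : Pth V E) (h : G) (δ : Pth V E)
    (h1 : ¬(β.1 = γ.1 ∧ β.2 <+: γ.2)) (h2 : ¬(γ.1 = β.1 ∧ γ.2 <+: β.2)) :
    sgeMulAux S (α, g, β) (γ, h, δ) = none := by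
  simp only [sgeMulAux]
  rw [if_neg h1, if_neg h2]

private lemma mulAux_self (α : Pth V E) (g : G) (β : Pth V E) (h : G) (δ : Pth V E) :
    sgeMulAux S (α, g, β) (β, h, δ) = some (α, g * h, δ) := by
  have h0 : ((β, h, δ) : Pth V E × G × Pth V E)
      = (SSGraph.comp β (Γ.src β, ([] : List E)), h, δ) := by
    simp [SSGraph.comp]
  rw [h0, mulAux_left S α g β h δ _ rfl,
    show ((Γ.src β, ([] : List E)) : Pth V E) = SSGraph.ofVertex (Γ.src β) from rfl,
    S.act_vertex, S.coc_vertex]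
  simp [SSGraph.comp, SSGraph.ofVertex]

private lemma act_prefix_transfer {p q : Pth V E} (hp : Γ.IsPath p) (hq : Γ.IsPath q)
    (h1 : p.1 = q.1) (h2 : p.2 <+: q.2) (g : G) :
    (S.act g p).2 <+: (S.act g q).2 := by
  obtain ⟨ε, hε1, hεp, rfl⟩ := split_path hp hq h1 h2
  rw [S.act_comp g p ε hp hεp hε1.symm]
  exact ⟨_, rfl⟩

private lemma sge_assoc (x y z : Pth V E × G × Pth V E)
    (hx : SgeCond Γ GA x) (hy : SgeCond Γ GA y) (hz : SgeCond Γ GA z) :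
    sgeMul S (sgeMul S (some x) (some y)) (some z)
      = sgeMul S (some x) (sgeMul S (some y) (some z)) := by
  obtain ⟨α, g, β⟩ := x
  obtain ⟨γ, h, δ⟩ := y
  obtain ⟨ζ, k, θ⟩ := z
  obtain ⟨hα, hβ, hsx⟩ := hx
  obtain ⟨hγ, hδ, hsy⟩ := hy
  obtain ⟨hζ, hθ, hsz⟩ := hz
  rw [sgeMul_some_some, sgeMul_some_some]
  rcases pathTri hβ hγ with ⟨ε, hε1, hεp, rfl⟩ | ⟨ε, hε1, hεp, hεne, rfl⟩ | ⟨hn1, hn2⟩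
  · -- Case 1 : γ = comp β ε
    rw [mulAux_left S α g β h δ ε hε1]
    have hsε : Γ.src ε = GA.actV h (Γ.src δ) := by
      rw [← hsy, src_comp' β ε hε1.symm]
    rcases pathTri hδ hζ with ⟨ε', hε'1, hε'p, rfl⟩ | ⟨ε', hε'1, hε'p, hε'ne, rfl⟩ |
        ⟨hm1, hm2⟩
    · -- A1
      rw [mulAux_left S (SSGraph.comp β ε) h δ k θ ε' hε'1, sgeMul_some_some,
        sgeMul_some_some,
        mulAux_left S (SSGraph.comp α (S.act g ε)) (S.coc g ε * h) δ k θ ε' hε'1,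
        comp_assoc₀ β ε (S.act h ε')]
      have hroot : (SSGraph.comp ε (S.act h ε')).1 = Γ.src β := by
        rw [show (SSGraph.comp ε (S.act h ε')).1 = ε.1 from rfl, hε1]
      rw [mulAux_left S α g β (S.coc h ε' * k) θ _ hroot]
      have hsrc2 : Γ.src ε = (S.act h ε').1 := by
        rw [S.ran_act h ε' hε'p, hε'1, hsε]
      rw [S.act_comp g ε (S.act h ε') hεp (S.isPath_act h ε' hε'p) hsrc2,
        S.coc_comp g ε (S.act h ε') hεp (S.isPath_act h ε' hε'p) hsrc2,
        S.act_mul (S.coc g ε) h ε' hε'p, S.coc_mul (S.coc g ε) h ε' hε'p,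
        comp_assoc₀, mul_assoc]
    · -- A2
      rw [mulAux_right S (SSGraph.comp β ε) h ζ k θ ε' hε'1 hε'ne, sgeMul_some_some,
        sgeMul_some_some,
        mulAux_right S (SSGraph.comp α (S.act g ε)) (S.coc g ε * h) ζ k θ ε' hε'1 hε'ne,
        mulAux_left S α g β (h * (S.coc k⁻¹ ε')⁻¹) (SSGraph.comp θ (S.act k⁻¹ ε')) ε hε1,
        mul_assoc]
    · -- A3
      rw [mulAux_none S (SSGraph.comp β ε) h δ ζ k θ hm1 hm2, sgeMul_some_some,
        mulAux_none S (SSGraph.comp α (S.act g ε)) (S.coc g ε * h) δ ζ k θ hm1 hm2,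
        sgeMul_none_right]
  · -- Case 2 : β = comp γ ε
    rw [mulAux_right S α g γ h δ ε hε1 hεne]
    have hroot1 : (S.act h⁻¹ ε).1 = Γ.src δ := by
      rw [S.ran_act h⁻¹ ε hεp, hε1, hsy, actV_inv']
    have hpath1 : Γ.IsPath (S.act h⁻¹ ε) := S.isPath_act h⁻¹ ε hεp
    rcases pathTri hδ hζ with ⟨ε', hε'1, hε'p, rfl⟩ | ⟨ε', hε'1, hε'p, hε'ne, rfl⟩ |
        ⟨hm1, hm2⟩
    · -- Case 5 : yz branch 1
      rw [mulAux_left S γ h δ k θ ε' hε'1, sgeMul_some_some, sgeMul_some_some]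
      rcases pathTri hpath1 hε'p with ⟨w, hw1, hwp, hq⟩ | ⟨w, hw1, hwp, hwne, hq⟩ |
          ⟨hp1, hp2⟩
      · -- 5a
        rw [hq, ← comp_assoc₀ δ (S.act h⁻¹ ε) w]
        have hw' : w.1 = Γ.src (SSGraph.comp δ (S.act h⁻¹ ε)) := by
          rw [src_comp' δ (S.act h⁻¹ ε) hroot1.symm]; exact hw1
        rw [mulAux_left S α (g * (S.coc h⁻¹ ε)⁻¹) (SSGraph.comp δ (S.act h⁻¹ ε)) k θ w hw',
          S.act_comp h (S.act h⁻¹ ε) w hpath1 hwp hw1.symm,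
          S.coc_comp h (S.act h⁻¹ ε) w hpath1 hwp hw1.symm,
          act_act_inv S h hεp, coc_act_inv S h hεp,
          ← comp_assoc₀ γ ε (S.act (S.coc h⁻¹ ε)⁻¹ w)]
        have hroot2 : (S.act (S.coc h⁻¹ ε)⁻¹ w).1 = Γ.src (SSGraph.comp γ ε) := by
          rw [S.ran_act _ w hwp, hw1, S.src_act h⁻¹ ε hεp, actV_coc_inv S hεp h⁻¹,
            actV_inv', src_comp' γ ε hε1.symm]
        rw [mulAux_left S α g (SSGraph.comp γ ε) (S.coc (S.coc h⁻¹ ε)⁻¹ w * k) θ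
            (S.act (S.coc h⁻¹ ε)⁻¹ w) hroot2,
          S.act_mul g (S.coc h⁻¹ ε)⁻¹ w hwp, S.coc_mul g (S.coc h⁻¹ ε)⁻¹ w hwp,
          mul_assoc]
      · -- 5b
        have hup : Γ.IsPath (S.act (S.coc h ε') w) := S.isPath_act _ w hwp
        have hune : (S.act (S.coc h ε') w).2 ≠ [] := by
          intro h0
          apply hwne
          have hl := S.length_act (S.coc h ε') w hwp
          rw [h0] at hl
          exact List.length_eq_zero_iff.mp hl.symm
        have hεq : ε = SSGraph.comp (S.act h ε') (S.act (S.coc h ε') w) := by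
          conv_lhs => rw [← act_act_inv S h hεp]
          rw [hq, S.act_comp h ε' w hε'p hwp hw1.symm]
        have hw' : w.1 = Γ.src (SSGraph.comp δ ε') := by
          rw [src_comp' δ ε' hε'1.symm]; exact hw1
        rw [hq, ← comp_assoc₀ δ ε' w,
          mulAux_right S α (g * (S.coc h⁻¹ ε)⁻¹) (SSGraph.comp δ ε') k θ w hw' hwne]
        have hu1 : (S.act (S.coc h ε') w).1 = Γ.src (SSGraph.comp γ (S.act h ε')) := by
          have hrγ : Γ.src γ = (S.act h ε').1 := by
            rw [S.ran_act h ε' hε'p, hε'1, hsy]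
          rw [S.ran_act _ w hwp, hw1, S.coc_vertex_act h ε' _ hε'p,
            src_comp' γ (S.act h ε') hrγ, S.src_act h ε' hε'p]
        nth_rewrite 2 [hεq]
        rw [← comp_assoc₀ γ (S.act h ε') (S.act (S.coc h ε') w),
          mulAux_right S α g (SSGraph.comp γ (S.act h ε')) (S.coc h ε' * k) θ
            (S.act (S.coc h ε') w) hu1 hune]
        have e3 : S.act (S.coc h ε' * k)⁻¹ (S.act (S.coc h ε') w) = S.act k⁻¹ w := by
          rw [mul_inv_rev, S.act_mul k⁻¹ (S.coc h ε')⁻¹ _ hup,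
            act_inv_act S (S.coc h ε') hwp]
        have e2 : S.coc (S.coc h ε' * k)⁻¹ (S.act (S.coc h ε') w)
            = S.coc k⁻¹ w * S.coc h⁻¹ ε := by
          rw [mul_inv_rev, S.coc_mul k⁻¹ (S.coc h ε')⁻¹ _ hup,
            act_inv_act S (S.coc h ε') hwp, coc_inv_act S (S.coc h ε') hwp,
            ← S.coc_comp h ε' w hε'p hwp hw1.symm, ← hq, coc_act_inv S h hεp, inv_inv]
        rw [e3, e2, mul_inv_rev, ← mul_assoc]
      · -- 5c
        have hre : (S.act h⁻¹ ε).1 = ε'.1 := by rw [hroot1, hε'1]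
        have np1 : ¬ (S.act h⁻¹ ε).2 <+: ε'.2 := fun hp => hp1 ⟨hre, hp⟩
        have np2 : ¬ ε'.2 <+: (S.act h⁻¹ ε).2 := fun hp => hp2 ⟨hre.symm, hp⟩
        have hrε : ε.1 = (S.act h ε').1 := by
          rw [S.ran_act h ε' hε'p, hε'1, hε1, hsy]
        have c1 : ¬((SSGraph.comp δ (S.act h⁻¹ ε)).1 = (SSGraph.comp δ ε').1 ∧
            (SSGraph.comp δ (S.act h⁻¹ ε)).2 <+: (SSGraph.comp δ ε').2) := by
          rintro ⟨-, hp⟩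
          exact np1 ((List.prefix_append_right_inj δ.2).mp hp)
        have c2 : ¬((SSGraph.comp δ ε').1 = (SSGraph.comp δ (S.act h⁻¹ ε)).1 ∧
            (SSGraph.comp δ ε').2 <+: (SSGraph.comp δ (S.act h⁻¹ ε)).2) := by
          rintro ⟨-, hp⟩
          exact np2 ((List.prefix_append_right_inj δ.2).mp hp)
        have d1 : ¬((SSGraph.comp γ ε).1 = (SSGraph.comp γ (S.act h ε')).1 ∧
            (SSGraph.comp γ ε).2 <+: (SSGraph.comp γ (S.act h ε')).2) := by
          rintro ⟨-, hp⟩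
          have hp' : ε.2 <+: (S.act h ε').2 := (List.prefix_append_right_inj γ.2).mp hp
          have ht := act_prefix_transfer S hεp (S.isPath_act h ε' hε'p) hrε hp' h⁻¹
          rw [act_inv_act S h hε'p] at ht
          exact np1 ht
        have d2 : ¬((SSGraph.comp γ (S.act h ε')).1 = (SSGraph.comp γ ε).1 ∧
            (SSGraph.comp γ (S.act h ε')).2 <+: (SSGraph.comp γ ε).2) := by
          rintro ⟨-, hp⟩
          have hp' : (S.act h ε').2 <+: ε.2 := (List.prefix_append_right_inj γ.2).mp hp
          have ht := act_prefix_transfer S (S.isPath_act h ε' hε'p) hεp hrε.symm hp' h⁻¹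
          rw [act_inv_act S h hε'p] at ht
          exact np2 ht
        rw [mulAux_none S α (g * (S.coc h⁻¹ ε)⁻¹) (SSGraph.comp δ (S.act h⁻¹ ε))
            (SSGraph.comp δ ε') k θ c1 c2,
          mulAux_none S α g (SSGraph.comp γ ε) (SSGraph.comp γ (S.act h ε'))
            (S.coc h ε' * k) θ d1 d2]
    · -- Case 6 : yz branch 2
      rw [mulAux_right S γ h ζ k θ ε' hε'1 hε'ne, sgeMul_some_some, sgeMul_some_some]
      have hb : Γ.src ε' = (S.act h⁻¹ ε).1 := by
        rw [hroot1, src_comp' ζ ε' hε'1.symm]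
      have hu1 : (SSGraph.comp ε' (S.act h⁻¹ ε)).1 = Γ.src ζ := by
        rw [show (SSGraph.comp ε' (S.act h⁻¹ ε)).1 = ε'.1 from rfl, hε'1]
      have hune : (SSGraph.comp ε' (S.act h⁻¹ ε)).2 ≠ [] := by
        show ε'.2 ++ (S.act h⁻¹ ε).2 ≠ []
        simp [hε'ne]
      rw [comp_assoc₀ ζ ε' (S.act h⁻¹ ε),
        mulAux_right S α (g * (S.coc h⁻¹ ε)⁻¹) ζ k θ (SSGraph.comp ε' (S.act h⁻¹ ε))
          hu1 hune,
        mulAux_right S α g γ (h * (S.coc k⁻¹ ε')⁻¹) (SSGraph.comp θ (S.act k⁻¹ ε')) ε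
          hε1 hεne,
        S.act_comp k⁻¹ ε' (S.act h⁻¹ ε) hε'p hpath1 hb,
        S.coc_comp k⁻¹ ε' (S.act h⁻¹ ε) hε'p hpath1 hb,
        mul_inv_rev, inv_inv, S.act_mul (S.coc k⁻¹ ε') h⁻¹ ε hεp,
        S.coc_mul (S.coc k⁻¹ ε') h⁻¹ ε hεp, mul_inv_rev,
        ← comp_assoc₀ θ (S.act k⁻¹ ε') (S.act (S.coc k⁻¹ ε') (S.act h⁻¹ ε)),
        ← mul_assoc]
    · -- Case 2 / yz = none
      have c1 : ¬((SSGraph.comp δ (S.act h⁻¹ ε)).1 = ζ.1 ∧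
          (SSGraph.comp δ (S.act h⁻¹ ε)).2 <+: ζ.2) := by
        rintro ⟨h1, h2⟩
        exact hm1 ⟨h1, (List.prefix_append δ.2 (S.act h⁻¹ ε).2).trans h2⟩
      have c2 : ¬(ζ.1 = (SSGraph.comp δ (S.act h⁻¹ ε)).1 ∧
          ζ.2 <+: (SSGraph.comp δ (S.act h⁻¹ ε)).2) := by
        rintro ⟨h1, h2⟩
        rcases List.prefix_or_prefix_of_prefix h2
            (List.prefix_append δ.2 (S.act h⁻¹ ε).2) with hc | hc
        · exact hm2 ⟨h1, hc⟩
        · exact hm1 ⟨h1.symm, hc⟩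
      rw [mulAux_none S γ h δ ζ k θ hm1 hm2, sgeMul_none_right, sgeMul_some_some,
        mulAux_none S α (g * (S.coc h⁻¹ ε)⁻¹) (SSGraph.comp δ (S.act h⁻¹ ε)) ζ k θ c1 c2]
  · -- Case 3 : xy = none
    rw [mulAux_none S α g β γ h δ hn1 hn2, sgeMul_none_left]
    rcases pathTri hδ hζ with ⟨ε', hε'1, hε'p, rfl⟩ | ⟨ε', hε'1, hε'p, hε'ne, rfl⟩ |
        ⟨hm1, hm2⟩
    · rw [mulAux_left S γ h δ k θ ε' hε'1, sgeMul_some_some]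
      have d1 : ¬(β.1 = (SSGraph.comp γ (S.act h ε')).1 ∧
          β.2 <+: (SSGraph.comp γ (S.act h ε')).2) := by
        rintro ⟨h1, h2⟩
        rcases List.prefix_or_prefix_of_prefix h2
            (List.prefix_append γ.2 (S.act h ε').2) with hc | hc
        · exact hn1 ⟨h1, hc⟩
        · exact hn2 ⟨h1.symm, hc⟩
      have d2 : ¬((SSGraph.comp γ (S.act h ε')).1 = β.1 ∧
          (SSGraph.comp γ (S.act h ε')).2 <+: β.2) := by
        rintro ⟨h1, h2⟩
        exact hn2 ⟨h1, (List.prefix_append γ.2 (S.act h ε').2).trans h2⟩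
      rw [mulAux_none S α g β (SSGraph.comp γ (S.act h ε')) (S.coc h ε' * k) θ d1 d2]
    · rw [mulAux_right S γ h ζ k θ ε' hε'1 hε'ne, sgeMul_some_some,
        mulAux_none S α g β γ (h * (S.coc k⁻¹ ε')⁻¹) (SSGraph.comp θ (S.act k⁻¹ ε'))
          hn1 hn2]
    · rw [mulAux_none S γ h δ ζ k θ hm1 hm2, sgeMul_none_right]

end SgeAux

open SSGraph in
theorem sge_inverse_semigroup {V E G : Type*} [Group G] [Countable G] [Fintype V] [Fintype E]
    (Γ : SSGraph V E) (hns : ∀ v : V, ∃ e, Γ.r e = v)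
    (GA : SSGraph.GraphAction G Γ) (c : SSGraph.EdgeCocycle GA)
    (S : PathSystem c) :
    (∀ x ∈ sgeSet Γ GA, ∀ y ∈ sgeSet Γ GA, sgeMul S x y ∈ sgeSet Γ GA) ∧
    (∀ x ∈ sgeSet Γ GA, sgeStar x ∈ sgeSet Γ GA) ∧
    (∀ x ∈ sgeSet Γ GA, ∀ y ∈ sgeSet Γ GA, ∀ z ∈ sgeSet Γ GA,
      sgeMul S (sgeMul S x y) z = sgeMul S x (sgeMul S y z)) ∧
    (∀ x, sgeMul S none x = none ∧ sgeMul S x none = none) ∧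
    (∀ x ∈ sgeSet Γ GA,
      sgeMul S (sgeMul S x (sgeStar x)) x = x ∧
      sgeMul S (sgeMul S (sgeStar x) x) (sgeStar x) = sgeStar x ∧
      ∀ y ∈ sgeSet Γ GA,
        sgeMul S (sgeMul S x y) x = x → sgeMul S (sgeMul S y x) y = y →
        y = sgeStar x) := by
  refine ⟨?_, ?_, ?_, ?_, ?_⟩
  · -- closure
    intro x hx y hy
    rcases hx with rfl | ⟨⟨α, g, β⟩, rfl, hα, hβ, hsx⟩
    · exact Or.inl (sgeMul_none_left S y)
    rcases hy with rfl | ⟨⟨γ, h, δ⟩, rfl, hγ, hδ, hsy⟩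
    · exact Or.inl (sgeMul_none_right S _)
    rcases pathTri hβ hγ with ⟨ε, hε1, hεp, rfl⟩ | ⟨ε, hε1, hεp, hεne, rfl⟩ | ⟨hn1, hn2⟩
    · refine Or.inr ⟨_, mulAux_left S α g β h δ ε hε1, ?_, hδ, ?_⟩
      · have h1 : Γ.src α = (S.act g ε).1 := by
          rw [hsx, S.ran_act g ε hεp, hε1]
        exact isPath_comp' hα (S.isPath_act g ε hεp) h1
      · have h1 : Γ.src α = (S.act g ε).1 := by
          rw [hsx, S.ran_act g ε hεp, hε1]
        have h2 : Γ.src ε = GA.actV h (Γ.src δ) := by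
          rw [← hsy, src_comp' β ε hε1.symm]
        show Γ.src (SSGraph.comp α (S.act g ε)) = GA.actV (S.coc g ε * h) (Γ.src δ)
        rw [src_comp' α (S.act g ε) h1, S.src_act g ε hεp, h2, GA.actV_mul,
          S.coc_vertex_act g ε _ hεp]
    · have hroot1 : (S.act h⁻¹ ε).1 = Γ.src δ := by
        rw [S.ran_act h⁻¹ ε hεp, hε1, hsy, actV_inv']
      refine Or.inr ⟨_, mulAux_right S α g γ h δ ε hε1 hεne, hα,
        isPath_comp' hδ (S.isPath_act h⁻¹ ε hεp) hroot1.symm, ?_⟩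
      show Γ.src α = GA.actV (g * (S.coc h⁻¹ ε)⁻¹)
        (Γ.src (SSGraph.comp δ (S.act h⁻¹ ε)))
      rw [src_comp' δ _ hroot1.symm, S.src_act h⁻¹ ε hεp, GA.actV_mul,
        actV_coc_inv S hεp h⁻¹, actV_inv', hsx, src_comp' γ ε hε1.symm]
    · exact Or.inl (mulAux_none S α g β γ h δ hn1 hn2)
  · -- star closure
    intro x hx
    rcases hx with rfl | ⟨⟨α, g, β⟩, rfl, hα, hβ, hsx⟩
    · exact Or.inl rfl
    · refine Or.inr ⟨(β, g⁻¹, α), rfl, hβ, hα, ?_⟩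
      show Γ.src β = GA.actV g⁻¹ (Γ.src α)
      rw [hsx, actV_inv']
  · -- associativity
    intro x hx y hy z hz
    rcases hx with rfl | ⟨tx, rfl, hx⟩
    · simp only [sgeMul_none_left]
    rcases hy with rfl | ⟨ty, rfl, hy⟩
    · simp only [sgeMul_none_left, sgeMul_none_right]
    rcases hz with rfl | ⟨tz, rfl, hz⟩
    · simp only [sgeMul_none_left, sgeMul_none_right]
    exact sge_assoc S tx ty tz hx hy hz
  · -- zero
    exact fun x => ⟨sgeMul_none_left S x, sgeMul_none_right S x⟩
  · -- inverses
    intro x hx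
    rcases hx with rfl | ⟨⟨α, g, β⟩, rfl, hα, hβ, hsx⟩
    · refine ⟨rfl, rfl, fun y hy h1 h2 => ?_⟩
      rcases hy with rfl | ⟨ty, rfl, hy⟩
      · rfl
      · rw [sgeMul_none_right, sgeMul_none_left] at h2
        exact h2.symm
    refine ⟨?_, ?_, ?_⟩
    · show sgeMul S (sgeMul S (some (α, g, β)) (some (β, g⁻¹, α))) (some (α, g, β))
        = some (α, g, β)
      rw [sgeMul_some_some, mulAux_self S α g β g⁻¹ α, sgeMul_some_some,
        mulAux_self S α (g * g⁻¹) α g β, mul_inv_cancel, one_mul]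
    · show sgeMul S (sgeMul S (some (β, g⁻¹, α)) (some (α, g, β))) (some (β, g⁻¹, α))
        = some (β, g⁻¹, α)
      rw [sgeMul_some_some, mulAux_self S β g⁻¹ α g β, sgeMul_some_some,
        mulAux_self S β (g⁻¹ * g) β g⁻¹ α, inv_mul_cancel, one_mul]
    · intro y hy h1 h2
      rcases hy with rfl | ⟨⟨γ, h, δ⟩, rfl, hγ, hδ, hsy⟩
      · rw [sgeMul_none_right, sgeMul_none_left] at h1
        exact absurd h1 (by simp)
      dsimp only at hα hβ hsx hγ hδ hsy h1 h2
      show some (γ, h, δ) = some (β, g⁻¹, α)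
      rcases pathTri hβ hγ with ⟨⟨εv, εl⟩, hε1, hεp, rfl⟩ |
          ⟨⟨εv, εl⟩, hε1, hεp, hεne, rfl⟩ | ⟨hn1, hn2⟩
      · -- xy branch 1
        rw [sgeMul_some_some, mulAux_left S α g β h δ (εv, εl) hε1,
          sgeMul_some_some] at h1
        rcases pathTri hδ hα with ⟨⟨wv, wl⟩, hw1, hwp, rfl⟩ |
            ⟨⟨wv, wl⟩, hw1, hwp, hwne, hq⟩ | ⟨hp1, hp2⟩
        · rw [mulAux_left S (SSGraph.comp (SSGraph.comp δ (wv, wl)) (S.act g (εv, εl)))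
              (S.coc g (εv, εl) * h) δ g β (wv, wl) hw1] at h1
          simp only [Option.some.injEq, Prod.mk.injEq] at h1
          obtain ⟨e1, e2, -⟩ := h1
          have hl := congrArg (fun p : Pth V E => p.2.length) e1
          simp [SSGraph.comp, S.length_act g (εv, εl) hεp,
            S.length_act (S.coc g (εv, εl) * h) (wv, wl) hwp] at hl
          obtain ⟨hε0, hw0⟩ := hl
          subst hε0; subst hw0
          rw [show ((εv, ([] : List E)) : Pth V E) = SSGraph.ofVertex εv from rfl,
            show ((wv, ([] : List E)) : Pth V E) = SSGraph.ofVertex wv from rfl,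
            S.coc_vertex, S.coc_vertex] at e2
          rw [mul_assoc] at e2
          have hinv : h = g⁻¹ := eq_inv_of_mul_eq_one_left (mul_eq_left.mp e2)
          simp [SSGraph.comp, SSGraph.ofVertex, hinv]
        · rw [hq, mulAux_right S (SSGraph.comp α (S.act g (εv, εl)))
              (S.coc g (εv, εl) * h) α g β (wv, wl) hw1 hwne] at h1
          simp only [Option.some.injEq, Prod.mk.injEq] at h1
          obtain ⟨-, -, e3⟩ := h1
          have hl := congrArg (fun p : Pth V E => p.2.length) e3
          simp [SSGraph.comp, S.length_act g⁻¹ (wv, wl) hwp] at hl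
          exact absurd hl hwne
        · rw [mulAux_none S (SSGraph.comp α (S.act g (εv, εl))) (S.coc g (εv, εl) * h)
            δ α g β hp1 hp2] at h1
          exact absurd h1 (by simp)
      · -- xy branch 2
        rw [sgeMul_some_some, mulAux_right S α g γ h δ (εv, εl) hε1 hεne,
          sgeMul_some_some] at h1
        have hroot1 : (S.act h⁻¹ (εv, εl)).1 = Γ.src δ := by
          rw [S.ran_act h⁻¹ (εv, εl) hεp, hε1, hsy, actV_inv']
        have hpath1 : Γ.IsPath (S.act h⁻¹ (εv, εl)) := S.isPath_act h⁻¹ _ hεp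
        rcases pathTri (isPath_comp' hδ hpath1 hroot1.symm) hα with
            ⟨⟨wv, wl⟩, hw1, hwp, hqα⟩ | ⟨⟨wv, wl⟩, hw1, hwp, hwne, hq⟩ | ⟨hp1, hp2⟩
        · rw [hqα, mulAux_left S
              (SSGraph.comp (SSGraph.comp δ (S.act h⁻¹ (εv, εl))) (wv, wl))
              (g * (S.coc h⁻¹ (εv, εl))⁻¹) (SSGraph.comp δ (S.act h⁻¹ (εv, εl))) g
              (SSGraph.comp γ (εv, εl)) (wv, wl) hw1] at h1
          simp only [Option.some.injEq, Prod.mk.injEq] at h1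
          obtain ⟨e1, e2, -⟩ := h1
          have hl := congrArg (fun p : Pth V E => p.2.length) e1
          simp [SSGraph.comp,
            S.length_act (g * (S.coc h⁻¹ (εv, εl))⁻¹) (wv, wl) hwp] at hl
          have hw0 : wl = [] := hl
          subst hw0
          rw [show ((wv, ([] : List E)) : Pth V E) = SSGraph.ofVertex wv from rfl,
            S.coc_vertex] at e2
          rw [mul_assoc] at e2
          have hc : (S.coc h⁻¹ (εv, εl))⁻¹ = g⁻¹ :=
            eq_inv_of_mul_eq_one_left (mul_eq_left.mp e2)
          have hc' : S.coc h⁻¹ (εv, εl) = g := by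
            rw [← inv_inv (S.coc h⁻¹ (εv, εl)), hc, inv_inv]
          have hαD : α = SSGraph.comp δ (S.act h⁻¹ (εv, εl)) := by
            rw [hqα]; simp [SSGraph.comp]
          rw [sgeMul_some_some, hαD,
            mulAux_left S γ h δ g (SSGraph.comp γ (εv, εl)) (S.act h⁻¹ (εv, εl)) hroot1,
            act_act_inv S h hεp, coc_act_inv S h hεp, hc', inv_mul_cancel,
            sgeMul_some_some,
            mulAux_right S (SSGraph.comp γ (εv, εl)) 1 γ h δ (εv, εl) hε1 hεne] at h2
          simp only [Option.some.injEq, Prod.mk.injEq] at h2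
          obtain ⟨f1, -, -⟩ := h2
          have hl2 := congrArg (fun p : Pth V E => p.2.length) f1
          simp [SSGraph.comp] at hl2
          exact absurd hl2 hεne
        · rw [hq, mulAux_right S α (g * (S.coc h⁻¹ (εv, εl))⁻¹) α g
              (SSGraph.comp γ (εv, εl)) (wv, wl) hw1 hwne] at h1
          simp only [Option.some.injEq, Prod.mk.injEq] at h1
          obtain ⟨-, -, e3⟩ := h1
          have hl := congrArg (fun p : Pth V E => p.2.length) e3
          simp [SSGraph.comp, S.length_act g⁻¹ (wv, wl) hwp] at hl
          exact absurd hl hwne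
        · rw [mulAux_none S α (g * (S.coc h⁻¹ (εv, εl))⁻¹)
            (SSGraph.comp δ (S.act h⁻¹ (εv, εl))) α g (SSGraph.comp γ (εv, εl))
            hp1 hp2] at h1
          exact absurd h1 (by simp)
      · -- xy = none
        rw [sgeMul_some_some, mulAux_none S α g β γ h δ hn1 hn2,
          sgeMul_none_left] at h1
        exact absurd h1 (by simp)
end

section
/- In the idempotent semilattice of S_{G,E}, any two idempotents e, f with ef ≠ 0 are comparable: either e ≤ f or f ≤ e. -/
open SSGraph in
lemma sge_coc_one {V E G : Type*} [Group G] {Γ : SSGraph V E} {GA : SSGraph.GraphAction G Γ}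
    {c : SSGraph.EdgeCocycle GA} (S : PathSystem c) (p : Pth V E) (hp : Γ.IsPath p) :
    S.coc 1 p = 1 := by
  have h := S.coc_mul 1 1 p hp
  rw [S.act_one p hp, one_mul] at h
  exact left_eq_mul.mp h

open SSGraph in
lemma sge_drop_isPath {V E : Type*} (Γ : SSGraph V E) (α β : Pth V E)
    (hα : Γ.IsPath α) (hβ : Γ.IsPath β) (h1 : α.1 = β.1) (h2 : α.2 <+: β.2) :
    Γ.IsPath (Γ.src α, β.2.drop α.2.length) ∧
      comp α (Γ.src α, β.2.drop α.2.length) = β := by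
  obtain ⟨t, ht⟩ := h2
  have hd : β.2.drop α.2.length = t := by rw [← ht, List.drop_left]
  have hchain := hβ.2
  rw [← ht, show List.Chain' _ _ = List.IsChain _ _ from rfl, List.isChain_append] at hchain
  constructor
  · refine ⟨?_, by rw [hd]; exact hchain.2.1⟩
    intro e he
    rw [hd] at he
    rcases hα2 : α.2.getLast? with _ | l
    · have : α.2 = [] := List.getLast?_eq_none_iff.mp hα2
      have : t.head? = β.2.head? := by rw [← ht, this]; rfl
      rw [this] at he
      have := hβ.1 e he
      simp [SSGraph.src, hα2, ‹α.2 = []›, h1, this]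
    · have := hchain.2.2 l hα2 e he
      simp [SSGraph.src, hα2, ← this]
  · simp [SSGraph.comp, hd, ← h1, ht, Prod.ext_iff]

open SSGraph in
theorem sge_idempotents_comparable {V E G : Type*} [Group G] [Countable G] [Fintype V] [Fintype E]
    (Γ : SSGraph V E) (hns : ∀ v : V, ∃ e, Γ.r e = v)
    (GA : SSGraph.GraphAction G Γ) (c : SSGraph.EdgeCocycle GA)
    (S : PathSystem c) (α β : Pth V E) (hα : Γ.IsPath α) (hβ : Γ.IsPath β)
    (hne : sgeMul S (some (α, 1, α)) (some (β, 1, β)) ≠ none) :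
    sgeMul S (some (α, 1, α)) (some (β, 1, β)) = some (α, 1, α) ∨
      sgeMul S (some (α, 1, α)) (some (β, 1, β)) = some (β, 1, β) := by
  show sgeMulAux S (α, 1, α) (β, 1, β) = _ ∨ sgeMulAux S (α, 1, α) (β, 1, β) = _
  have hne' : sgeMulAux S (α, 1, α) (β, 1, β) ≠ none := hne
  unfold sgeMulAux at hne' ⊢
  by_cases h : α.1 = β.1 ∧ α.2 <+: β.2
  · right
    obtain ⟨hε, hcomp⟩ := sge_drop_isPath Γ α β hα hβ h.1 h.2
    simp [h, hcomp, sge_coc_one S _ hε, S.act_one _ hε]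
  · by_cases h' : β.1 = α.1 ∧ β.2 <+: α.2
    · left
      obtain ⟨hε, hcomp⟩ := sge_drop_isPath Γ β α hβ hα h'.1 h'.2
      rw [if_neg h]
      simp [h', hcomp, sge_coc_one S _ hε, S.act_one _ hε]
    · rw [if_neg h, if_neg h'] at hne'
      exact absurd rfl hne'
end

section
/- There is a unique action of G on the space E^∞ of infinite paths such that the length-n truncation of g·ξ equals g applied to the length-n truncation of ξ, for all n ≥ 0. -/
section InfHelpers

open SSGraph

variable {V E G : Type*} [Group G] {Γ : SSGraph V E} {GA : SSGraph.GraphAction G Γ}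
  {c : SSGraph.EdgeCocycle GA}

lemma trunc_length' (Γ : SSGraph V E) (ξ : ℕ → E) (n : ℕ) : (Γ.trunc ξ n).2.length = n := by
  simp [SSGraph.trunc]

lemma chain'_trunc {ξ : ℕ → E} (hξ : Γ.InfPath ξ) (n : ℕ) :
    ((List.range n).map ξ).Chain' (fun a b => Γ.d a = Γ.r b) := by
  unfold List.Chain'
  rw [List.isChain_map]
  cases n with
  | zero => simp
  | succ n => rw [List.isChain_range_succ]; intro m _; exact hξ m

lemma trunc_isPath {ξ : ℕ → E} (hξ : Γ.InfPath ξ) (n : ℕ) : Γ.IsPath (Γ.trunc ξ n) := by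
  refine ⟨?_, chain'_trunc hξ n⟩
  intro e he
  cases n with
  | zero => simp [SSGraph.trunc] at he
  | succ n =>
    simp only [SSGraph.trunc, List.range_succ_eq_map, List.map_cons, List.head?_cons,
      Option.mem_def, Option.some.injEq] at he
    rw [← he]; rfl

lemma src_trunc {ξ : ℕ → E} (hξ : Γ.InfPath ξ) (n : ℕ) :
    Γ.src (Γ.trunc ξ n) = Γ.r (ξ n) := by
  cases n with
  | zero => rfl
  | succ n =>
    have h : ((List.range (n+1)).map ξ).getLast? = some (ξ n) := by
      rw [List.range_succ, List.map_append]; exact List.getLast?_concat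
    show SSGraph.src Γ (Γ.r (ξ 0), (List.range (n+1)).map ξ) = _
    unfold SSGraph.src
    simp only [h]
    exact hξ n

lemma tail_isPath {ξ : ℕ → E} (hξ : Γ.InfPath ξ) (n m : ℕ) (h : n ≤ m) :
    Γ.IsPath (Γ.r (ξ n), ((List.range m).map ξ).drop n) := by
  constructor
  · intro e he
    rw [List.head?_drop] at he
    rcases lt_or_eq_of_le h with h' | h'
    · simp only [List.getElem?_map, List.getElem?_range h', Option.map_some,
        Option.mem_def, Option.some.injEq] at he
      rw [← he]
    · subst h'
      simp only [List.getElem?_map] at he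
      rw [List.getElem?_eq_none (by simp)] at he
      simp at he
  · have := chain'_trunc hξ m
    rw [← List.take_append_drop n ((List.range m).map ξ)] at this
    exact (List.isChain_append.mp this).2.1

lemma trunc_comp {ξ : ℕ → E} (n m : ℕ) (h : n ≤ m) :
    Γ.trunc ξ m = SSGraph.comp (Γ.trunc ξ n) (Γ.r (ξ n), ((List.range m).map ξ).drop n) := by
  have ht : List.take n ((List.range m).map ξ) = (List.range n).map ξ := by
    rw [← List.map_take, List.take_range, Nat.min_eq_left h]
  simp only [SSGraph.trunc, SSGraph.comp]
  congr 1
  rw [← ht, List.take_append_drop]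

lemma act_trunc_take (S : PathSystem c) (g : G) {ξ : ℕ → E} (hξ : Γ.InfPath ξ)
    {n m : ℕ} (h : n ≤ m) :
    (S.act g (Γ.trunc ξ m)).2.take n = (S.act g (Γ.trunc ξ n)).2 := by
  have hact := S.act_comp g (Γ.trunc ξ n) (Γ.r (ξ n), ((List.range m).map ξ).drop n)
      (trunc_isPath hξ n) (tail_isPath hξ n m h) (src_trunc hξ n)
  rw [← trunc_comp n m h] at hact
  rw [hact]
  show (((S.act g (Γ.trunc ξ n)).2) ++ _).take n = _
  exact List.take_left' (by rw [S.length_act g _ (trunc_isPath hξ n), trunc_length'])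

lemma act_trunc_getElem (S : PathSystem c) (g : G) {ξ : ℕ → E} (hξ : Γ.InfPath ξ)
    {k m : ℕ} (h : k < m) (hk : k < (S.act g (Γ.trunc ξ m)).2.length) :
    (S.act g (Γ.trunc ξ m)).2[k] = (S.act g (Γ.trunc ξ (k+1))).2.getD k (ξ k) := by
  have hlen : (S.act g (Γ.trunc ξ (k+1))).2.length = k+1 := by
    rw [S.length_act g _ (trunc_isPath hξ (k+1)), trunc_length']
  rw [List.getD_eq_getElem _ _ (by omega)]
  have h2 := List.getElem_take' (xs := (S.act g (Γ.trunc ξ m)).2) hk (show k < k+1 by omega)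
  rw [h2]
  congr 1
  exact act_trunc_take S g hξ (show k+1 ≤ m by omega)

/-- The candidate action on infinite paths. -/
def infAct (S : PathSystem c) (g : G) (ξ : ℕ → E) : ℕ → E :=
  fun k => (S.act g (Γ.trunc ξ (k+1))).2.getD k (ξ k)

lemma trunc_infAct (S : PathSystem c) (g : G) {ξ : ℕ → E} (hξ : Γ.InfPath ξ) (m : ℕ) :
    Γ.trunc (infAct S g ξ) m = S.act g (Γ.trunc ξ m) := by
  have hfst : ∀ j, (S.act g (Γ.trunc ξ j)).1 = GA.actV g (Γ.r (ξ 0)) := fun j =>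
    S.ran_act g _ (trunc_isPath hξ j)
  have hlen : ∀ j, (S.act g (Γ.trunc ξ j)).2.length = j := fun j => by
    rw [S.length_act g _ (trunc_isPath hξ j), trunc_length']
  have hfst0 : Γ.r (infAct S g ξ 0) = GA.actV g (Γ.r (ξ 0)) := by
    obtain ⟨e, he⟩ := List.length_eq_one_iff.mp (hlen 1)
    have hp := S.isPath_act g _ (trunc_isPath hξ 1)
    show Γ.r ((S.act g (Γ.trunc ξ 1)).2.getD 0 (ξ 0)) = _
    rw [he]
    have := hp.1 e (by rw [he]; rfl)
    show Γ.r e = _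
    rw [this, hfst 1]
  have hsnd : (List.range m).map (infAct S g ξ) = (S.act g (Γ.trunc ξ m)).2 := by
    apply List.ext_getElem
    · simp [hlen m]
    · intro k h1 h2
      simp only [List.getElem_map, List.getElem_range]
      exact (act_trunc_getElem S g hξ (by simpa using h1) h2).symm
  show (Γ.r (infAct S g ξ 0), (List.range m).map (infAct S g ξ)) = _
  rw [hsnd, hfst0, ← hfst m]

lemma infPath_of_trunc {ζ : ℕ → E} (h : ∀ m, Γ.IsPath (Γ.trunc ζ m)) : Γ.InfPath ζ := by
  intro n
  have : ((List.range (n+2)).map ζ).Chain' (fun a b => Γ.d a = Γ.r b) := (h (n+2)).2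
  unfold List.Chain' at this
  rw [List.isChain_map, List.isChain_range_succ] at this
  exact this n (by omega)

lemma eq_of_trunc {ζ ξ : ℕ → E} (h : ∀ m, Γ.trunc ζ m = Γ.trunc ξ m) : ζ = ξ := by
  funext n
  have h2 : (List.range (n+1)).map ζ = (List.range (n+1)).map ξ :=
    congrArg Prod.snd (h (n+1))
  have h3 : ((List.range (n+1)).map ζ)[n]'(by simp) = ((List.range (n+1)).map ξ)[n]'(by simp) := by
    simp only [h2]
  simpa using h3

end InfHelpers

open SSGraph in
theorem infinite_path_action_exists_unique {V E G : Type*} [Group G] [Countable G] [Fintype V] [Fintype E]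
    (Γ : SSGraph V E) (hns : ∀ v : V, ∃ e, Γ.r e = v)
    (GA : SSGraph.GraphAction G Γ) (c : SSGraph.EdgeCocycle GA)
    (S : PathSystem c) :
    ∃ a : G → (ℕ → E) → (ℕ → E),
      (∀ g ξ, Γ.InfPath ξ → Γ.InfPath (a g ξ)) ∧
      (∀ ξ, Γ.InfPath ξ → a 1 ξ = ξ) ∧
      (∀ g h ξ, Γ.InfPath ξ → a (g * h) ξ = a g (a h ξ)) ∧
      (∀ g ξ n, Γ.InfPath ξ → Γ.trunc (a g ξ) n = S.act g (Γ.trunc ξ n)) ∧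
      ∀ a' : G → (ℕ → E) → (ℕ → E),
        (∀ g ξ n, Γ.InfPath ξ → Γ.trunc (a' g ξ) n = S.act g (Γ.trunc ξ n)) →
        ∀ g ξ, Γ.InfPath ξ → a' g ξ = a g ξ := by
  have hInf : ∀ g ξ, Γ.InfPath ξ → Γ.InfPath (infAct S g ξ) := by
    intro g ξ hξ
    apply infPath_of_trunc
    intro m
    rw [trunc_infAct S g hξ]
    exact S.isPath_act g _ (trunc_isPath hξ m)
  refine ⟨fun g ξ => infAct S g ξ, hInf, ?_, ?_, ?_, ?_⟩
  · intro ξ hξ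
    apply eq_of_trunc
    intro m
    rw [trunc_infAct S 1 hξ, S.act_one _ (trunc_isPath hξ m)]
  · intro g h ξ hξ
    apply eq_of_trunc
    intro m
    rw [trunc_infAct S _ hξ, trunc_infAct S g (hInf h ξ hξ), trunc_infAct S h hξ,
      S.act_mul g h _ (trunc_isPath hξ m)]
  · intro g ξ n hξ
    exact trunc_infAct S g hξ n
  · intro a' ha' g ξ hξ
    apply eq_of_trunc
    intro m
    rw [ha' g ξ m hξ, trunc_infAct S g hξ]
end
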